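/- The closure-by-regions widening does not commute with the time-elapse operator for event clocks: there exist a finite set of regions R (the Alur–Dill regions Reg over clocks of a one-letter alphabet with cmax = 1) and an event-zone Z such that Future(Closure_R(Z)) is not contained in Closure_R(Future(Z)). -/
import Mathlib


/-- Event clocks over alphabet `α`: a history clock and a prophecy clock per letter. -/
inductive Clock (α : Type) where
  | hist (a : α)
  | proph (a : α)
deriving DecidableEq

/-- A valuation assigns to each event clock a real value or `⊥` (here `none`). -/
def Val (α : Type) := Clock α → Option ℝ

/-- All defined clock values are nonnegative. -/
def Nonneg {α : Type} (v : Val α) : Prop := ∀ x r, v x = some r → 0 ≤ r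

/-- `v[x := d]`. -/
def Val.set {α : Type} [DecidableEq α] (v : Val α) (x : Clock α) (d : Option ℝ) : Val α :=
  fun y => if y = x then d else v y

/-- Time elapse: history clocks increase, prophecy clocks decrease; `⊥` unaffected. -/
def elapse {α : Type} (v : Val α) (t : ℝ) : Val α := fun c =>
  match c with
  | .hist a => (v (.hist a)).map (· + t)
  | .proph a => (v (.proph a)).map (· - t)

/-- Time elapse by `t` is allowed: `t ≥ 0` and all prophecy clocks are at least `t`. -/
def CanElapse {α : Type} (v : Val α) (t : ℝ) : Prop :=
  0 ≤ t ∧ ∀ a r, v (.proph a) = some r → t ≤ r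

def InitialVal {α : Type} (v : Val α) : Prop := ∀ a, v (.hist a) = none

def FinalVal {α : Type} (v : Val α) : Prop := ∀ a, v (.proph a) = none

/-- Clock constraints: Boolean combinations of atomic constraints `x ∼ c`. -/
inductive Constr (α : Type) where
  | tt
  | lt (x : Clock α) (c : ℕ)
  | gt (x : Clock α) (c : ℕ)
  | eq (x : Clock α) (c : ℕ)
  | not (ψ : Constr α)
  | and (ψ₁ ψ₂ : Constr α)

def Constr.sat {α : Type} (v : Val α) : Constr α → Prop
  | .tt => True
  | .lt x c => ∃ r, v x = some r ∧ r < (c : ℝ)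
  | .gt x c => ∃ r, v x = some r ∧ (c : ℝ) < r
  | .eq x c => v x = some (c : ℝ)
  | .not ψ => ¬ Constr.sat v ψ
  | .and ψ₁ ψ₂ => Constr.sat v ψ₁ ∧ Constr.sat v ψ₂

/-- An event-clock automaton. -/
structure ECTA (α Q : Type) where
  init : Q
  edges : Set (Q × α × Constr α × Q)
  accept : Set Q

/-- Discrete step on letter `σ`: there is a nonnegative valuation `v̄` with
`v̄[→σ := 0] = v`, `v̄[←σ := 0] = v'` and `v̄ ⊨ ψ` for some edge `(q,σ,ψ,q')`. -/
def DStep {α Q : Type} [DecidableEq α] (A : ECTA α Q) (q : Q) (v : Val α) (σ : α)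
    (q' : Q) (v' : Val α) : Prop :=
  ∃ ψ, (q, σ, ψ, q') ∈ A.edges ∧
    ∃ vb : Val α, Nonneg vb ∧
      vb.set (.proph σ) (some 0) = v ∧
      vb.set (.hist σ) (some 0) = v' ∧
      Constr.sat vb ψ

/-- Combined step: elapse `t`, then fire a `σ`-edge. -/
def TStep {α Q : Type} [DecidableEq α] (A : ECTA α Q) (q : Q) (v : Val α) (t : ℝ) (σ : α)
    (q' : Q) (v' : Val α) : Prop :=
  CanElapse v t ∧ DStep A q (elapse v t) σ q' v'

/-- Acceptance of a timed word (given by successive delays) from state `(q,v)`. -/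
inductive ECAcc {α Q : Type} [DecidableEq α] (A : ECTA α Q) : Q → Val α → List (ℝ × α) → Prop where
  | nil : ∀ q v, q ∈ A.accept → FinalVal v → ECAcc A q v []
  | cons : ∀ q v t σ q' v' w, TStep A q v t σ q' v' → ECAcc A q' v' w → ECAcc A q v ((t, σ) :: w)

/-- `Untime(L(A,(q,v)))`. -/
def UntimedLangFrom {α Q : Type} [DecidableEq α] (A : ECTA α Q) (q : Q) (v : Val α) :
    Set (List α) :=
  { w | ∃ θ : List (ℝ × α), ECAcc A q v θ ∧ θ.map Prod.snd = w }

/-- The timed language of `A` (initialized runs). -/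
def TLang {α Q : Type} [DecidableEq α] (A : ECTA α Q) : Set (List (ℝ × α)) :=
  { θ | ∃ v, Nonneg v ∧ InitialVal v ∧ ECAcc A A.init v θ }

/-- `Untime(L(A))`. -/
def UntimedLang {α Q : Type} [DecidableEq α] (A : ECTA α Q) : Set (List α) :=
  { w | ∃ v, Nonneg v ∧ InitialVal v ∧ w ∈ UntimedLangFrom A A.init v }
/-- Distance to the relevant integer boundary: `⌈r⌉ − r` for history clocks,
`r − ⌊r⌋` for prophecy clocks. -/
noncomputable def fracDist {α : Type} : Clock α → ℝ → ℝ
  | .hist _, r => (⌈r⌉ : ℝ) - r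
  | .proph _, r => r - (⌊r⌋ : ℝ)

/-- Signed value used for diagonal constraints: prophecy clocks are negated. -/
def sval {α : Type} : Clock α → ℝ → ℝ
  | .hist _, r => r
  | .proph _, r => -r

/-- The Alur–Dill region equivalence with maximal constant `cmax`. -/
def RegEq {α : Type} (cmax : ℕ) (v₁ v₂ : Val α) : Prop :=
  (∀ x, v₁ x = none ↔ v₂ x = none) ∧
  (∀ x r₁ r₂, v₁ x = some r₁ → v₂ x = some r₂ →
      (((cmax : ℝ) < r₁ ∧ (cmax : ℝ) < r₂) ∨ (⌈r₁⌉ = ⌈r₂⌉ ∧ ⌊r₁⌋ = ⌊r₂⌋))) ∧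
  (∀ x y rx₁ ry₁ rx₂ ry₂, v₁ x = some rx₁ → v₁ y = some ry₁ →
      v₂ x = some rx₂ → v₂ y = some ry₂ → rx₁ ≤ (cmax : ℝ) → ry₁ ≤ (cmax : ℝ) →
      (fracDist x rx₁ ≤ fracDist y ry₁ ↔ fracDist x rx₂ ≤ fracDist y ry₂))

/-- The refined (Bouyer-style) region equivalence. -/
def RegEqD {α : Type} (cmax : ℕ) (v₁ v₂ : Val α) : Prop :=
  RegEq cmax v₁ v₂ ∧
  (∀ x y rx₁ ry₁ rx₂ ry₂, v₁ x = some rx₁ → v₁ y = some ry₁ →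
      v₂ x = some rx₂ → v₂ y = some ry₂ →
      ((cmax : ℝ) < rx₁ ∨ (cmax : ℝ) < ry₁) →
      ((2 * (cmax : ℝ) < |sval x rx₁ - sval y ry₁| ∧ 2 * (cmax : ℝ) < |sval x rx₂ - sval y ry₂|) ∨
       (⌊sval x rx₁ - sval y ry₁⌋ = ⌊sval x rx₂ - sval y ry₂⌋ ∧
        ⌈sval x rx₁ - sval y ry₁⌉ = ⌈sval x rx₂ - sval y ry₂⌉)))

/-- A region of an equivalence `E`: an equivalence class of nonnegative valuations. -/
def IsRegionOf {α : Type} (E : Val α → Val α → Prop) (r : Set (Val α)) : Prop :=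
  ∃ v, Nonneg v ∧ r = { v' | Nonneg v' ∧ E v v' }

def InitialRegion {α : Type} (r : Set (Val α)) : Prop := ∀ v ∈ r, InitialVal v
def FinalRegion {α : Type} (r : Set (Val α)) : Prop := ∀ v ∈ r, FinalVal v

/-- Acceptance in the universal region automaton `RA(∀,E,A)`. -/
inductive UAcc {α Q : Type} [DecidableEq α] (A : ECTA α Q) (E : Val α → Val α → Prop) :
    Q → Set (Val α) → List α → Prop where
  | nil : ∀ q r, q ∈ A.accept → IsRegionOf E r → FinalRegion r → UAcc A E q r []
  | cons : ∀ q r σ q' r' w, IsRegionOf E r → IsRegionOf E r' →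
      (∀ v ∈ r, ∃ t v', v' ∈ r' ∧ TStep A q v t σ q' v') →
      UAcc A E q' r' w → UAcc A E q r (σ :: w)

/-- Acceptance in the existential region automaton `RA(∃,E,A)`. -/
inductive EAcc {α Q : Type} [DecidableEq α] (A : ECTA α Q) (E : Val α → Val α → Prop) :
    Q → Set (Val α) → List α → Prop where
  | nil : ∀ q r, q ∈ A.accept → IsRegionOf E r → FinalRegion r → EAcc A E q r []
  | cons : ∀ q r σ q' r' w, IsRegionOf E r → IsRegionOf E r' →
      (∃ v ∈ r, ∃ t v', v' ∈ r' ∧ TStep A q v t σ q' v') →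
      EAcc A E q' r' w → EAcc A E q r (σ :: w)

/-- The language of the universal region automaton. -/
def ULang {α Q : Type} [DecidableEq α] (A : ECTA α Q) (E : Val α → Val α → Prop) :
    Set (List α) :=
  { w | ∃ r, IsRegionOf E r ∧ InitialRegion r ∧ UAcc A E A.init r w }

/-- The language of the existential region automaton. -/
def ELang {α Q : Type} [DecidableEq α] (A : ECTA α Q) (E : Val α → Val α → Prop) :
    Set (List α) :=
  { w | ∃ r, IsRegionOf E r ∧ InitialRegion r ∧ EAcc A E A.init r w }

/-- All constants in a constraint are at most `k`. -/
def Constr.BoundedBy {α : Type} (k : ℕ) : Constr α → Prop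
  | .tt => True
  | .lt _ c => c ≤ k
  | .gt _ c => c ≤ k
  | .eq _ c => c ≤ k
  | .not ψ => Constr.BoundedBy k ψ
  | .and ψ₁ ψ₂ => Constr.BoundedBy k ψ₁ ∧ Constr.BoundedBy k ψ₂

/-- `cmax` bounds all constants appearing in the guards of `A`. -/
def MaxConstLe {α Q : Type} (A : ECTA α Q) (k : ℕ) : Prop :=
  ∀ e ∈ A.edges, Constr.BoundedBy k e.2.2.1
/-- Whether a clock is a prophecy clock. -/
def Clock.isProph {α : Type} : Clock α → Bool
  | .hist _ => false
  | .proph _ => true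

/-- Comparison operators `≤, <, ≥, >` used in zone constraints. -/
inductive Cmp where
  | le | lt | ge | gt

def Cmp.sat : Cmp → ℝ → ℝ → Prop
  | .le, r, c => r ≤ c
  | .lt, r, c => r < c
  | .ge, r, c => c ≤ r
  | .gt, r, c => c < r

/-- Atomic zone constraints: `x = ⊥`, `x ∼ c`, `x₁ − x₂ ∼ c`, `x₁ + x₂ ∼ c`. -/
inductive ZAtom (α : Type) where
  | bot (x : Clock α)
  | single (x : Clock α) (op : Cmp) (c : ℤ)
  | diff (x y : Clock α) (op : Cmp) (c : ℤ)
  | sum (x y : Clock α) (op : Cmp) (c : ℤ)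

/-- Well-formedness: differences for clocks of the same type, sums for opposite types. -/
def ZAtom.WF {α : Type} : ZAtom α → Prop
  | .bot _ => True
  | .single _ _ _ => True
  | .diff x y _ _ => x.isProph = y.isProph
  | .sum x y _ _ => x.isProph ≠ y.isProph

def ZAtom.sat {α : Type} (v : Val α) : ZAtom α → Prop
  | .bot x => v x = none
  | .single x op c => ∃ r, v x = some r ∧ op.sat r (c : ℝ)
  | .diff x y op c => ∃ rx ry, v x = some rx ∧ v y = some ry ∧ op.sat (rx - ry) (c : ℝ)
  | .sum x y op c => ∃ rx ry, v x = some rx ∧ v y = some ry ∧ op.sat (rx + ry) (c : ℝ)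

/-- An event-zone: a set of (nonnegative) valuations definable by a finite
conjunction of well-formed atomic zone constraints. -/
def IsEventZone {α : Type} (Z : Set (Val α)) : Prop :=
  ∃ l : List (ZAtom α), (∀ a ∈ l, a.WF) ∧ Z = { v | Nonneg v ∧ ∀ a ∈ l, a.sat v }

/-- Closure by regions: the union of all regions meeting `Z`. -/
def ClosureR {α : Type} (cmax : ℕ) (Z : Set (Val α)) : Set (Val α) :=
  { v' | Nonneg v' ∧ ∃ v ∈ Z, RegEq cmax v v' }

/-- Future (time elapse) of a set of valuations. -/
def FutureS {α : Type} (Z : Set (Val α)) : Set (Val α) :=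
  { w | ∃ v ∈ Z, ∃ t, CanElapse v t ∧ w = elapse v t }

/-- Closure by regions does not commute with time elapse for event clocks: over a
one-letter alphabet with `cmax = 1` there is an event-zone `Z` with
`Future(Closure(Z)) ⊄ Closure(Future(Z))`. -/
theorem closure_does_not_commute_with_future :
    ∃ Z : Set (Val Unit), IsEventZone Z ∧
      ¬ FutureS (ClosureR 1 Z) ⊆ ClosureR 1 (FutureS Z) := by
  classical
  set l : List (ZAtom Unit) :=
    [ZAtom.single (.hist ()) .le 0, ZAtom.single (.hist ()) .ge 0,
     ZAtom.single (.proph ()) .le 2, ZAtom.single (.proph ()) .ge 2] with hl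
  refine ⟨{ v | Nonneg v ∧ ∀ a ∈ l, a.sat v }, ⟨l, ?_, rfl⟩, ?_⟩
  · intro a ha
    rw [hl] at ha
    fin_cases ha <;> trivial
  set v : Val Unit := (fun c => match c with
    | .hist _ => some 0
    | .proph _ => some 2) with hv
  set v' : Val Unit := (fun c => match c with
    | .hist _ => some 0
    | .proph _ => some (11/10 : ℝ)) with hv'
  set w : Val Unit := (fun c => match c with
    | .hist _ => some 1
    | .proph _ => some (1/10 : ℝ)) with hw
  intro hsub
  have hvZ : v ∈ { u : Val Unit | Nonneg u ∧ ∀ a ∈ l, a.sat u } := by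
    constructor
    · intro x r hx
      cases x with
      | hist a => exact le_of_eq (Option.some.inj hx)
      | proph a => have h2 : (2:ℝ) = r := Option.some.inj hx; linarith
    · intro a ha
      rw [hl] at ha
      fin_cases ha <;> exact ⟨_, rfl, by norm_num [Cmp.sat]⟩
  -- v' is region-equivalent to v
  have hreg : RegEq 1 v v' := by
    refine ⟨?_, ?_, ?_⟩
    · intro x; cases x <;> simp [hv, hv']
    · intro x r₁ r₂ h1 h2
      cases x with
      | hist a =>
        right
        have e1 : (0:ℝ) = r₁ := Option.some.inj h1
        have e2 : (0:ℝ) = r₂ := Option.some.inj h2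
        subst e1; subst e2; exact ⟨rfl, rfl⟩
      | proph a =>
        left
        have e1 : (2:ℝ) = r₁ := Option.some.inj h1
        have e2 : (11/10:ℝ) = r₂ := Option.some.inj h2
        constructor <;> push_cast <;> linarith
    · intro x y rx₁ ry₁ rx₂ ry₂ hx1 hy1 hx2 hy2 hbx hby
      cases x with
      | proph a =>
        exfalso
        have e1 : (2:ℝ) = rx₁ := Option.some.inj hx1
        push_cast at hbx; linarith
      | hist a =>
        cases y with
        | proph b =>
          exfalso
          have e1 : (2:ℝ) = ry₁ := Option.some.inj hy1
          push_cast at hby; linarith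
        | hist b =>
          have e1 : (0:ℝ) = rx₁ := Option.some.inj hx1
          have e2 : (0:ℝ) = ry₁ := Option.some.inj hy1
          have e3 : (0:ℝ) = rx₂ := Option.some.inj hx2
          have e4 : (0:ℝ) = ry₂ := Option.some.inj hy2
          subst e1; subst e2; subst e3; subst e4
          exact Iff.rfl
  -- w ∈ Future(Closure(Z))
  have hwF : w ∈ FutureS (ClosureR 1 { u : Val Unit | Nonneg u ∧ ∀ a ∈ l, a.sat u }) := by
    refine ⟨v', ⟨?_, v, hvZ, hreg⟩, 1, ⟨zero_le_one, ?_⟩, ?_⟩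
    · intro x r hx
      cases x with
      | hist a => exact le_of_eq (Option.some.inj hx)
      | proph a => have := Option.some.inj hx; linarith [this]
    · intro a r hr
      have : (11/10:ℝ) = r := Option.some.inj hr
      linarith
    · funext c
      cases c <;> norm_num [elapse, hv', hw]
  -- but w ∉ Closure(Future(Z))
  obtain ⟨-, u, ⟨v₀, hv₀Z, t, hce, hu⟩, hru⟩ := hsub hwF
  -- v₀ must be exactly v
  have hh : v₀ (.hist ()) = some 0 := by
    have h1 := hv₀Z.2 _ (by simp [hl] : ZAtom.single (Clock.hist ()) .le 0 ∈ l)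
    have h2 := hv₀Z.2 _ (by simp [hl] : ZAtom.single (Clock.hist ()) .ge 0 ∈ l)
    obtain ⟨r, hr, hrle⟩ := h1
    obtain ⟨r', hr', hrge⟩ := h2
    rw [hr'] at hr
    have : r' = r := Option.some.inj hr
    subst this
    have : r' = 0 := by
      simp [Cmp.sat] at hrle hrge; linarith
    rw [hr', this]
  have hp : v₀ (.proph ()) = some 2 := by
    have h1 := hv₀Z.2 _ (by simp [hl] : ZAtom.single (Clock.proph ()) .le 2 ∈ l)
    have h2 := hv₀Z.2 _ (by simp [hl] : ZAtom.single (Clock.proph ()) .ge 2 ∈ l)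
    obtain ⟨r, hr, hrle⟩ := h1
    obtain ⟨r', hr', hrge⟩ := h2
    rw [hr'] at hr
    have : r' = r := Option.some.inj hr
    subst this
    have : r' = 2 := by
      simp [Cmp.sat] at hrle hrge; linarith
    rw [hr', this]
  -- so u = (t, 2 - t)
  have huh : u (.hist ()) = some t := by
    rw [hu]; show (v₀ (.hist ())).map (· + t) = _
    rw [hh]; simp
  have hup : u (.proph ()) = some (2 - t) := by
    rw [hu]; show (v₀ (.proph ())).map (· - t) = _
    rw [hp]; simp
  -- region equivalence with w forces t = 1
  have hwh : w (.hist ()) = some 1 := rfl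
  have hwp : w (.proph ()) = some (1/10 : ℝ) := rfl
  have ht1 := hru.2.1 (.hist ()) t 1 huh hwh
  have ht : t = 1 := by
    rcases ht1 with ⟨-, h⟩ | ⟨hc, hf⟩
    · push_cast at h; linarith
    · have h1 : ⌈(1:ℝ)⌉ = 1 := by norm_num
      have h2 : ⌊(1:ℝ)⌋ = 1 := by norm_num
      rw [h1] at hc; rw [h2] at hf
      have hle : t ≤ 1 := by
        have := Int.le_ceil t; rw [hc] at this; exact_mod_cast this
      have hge : (1:ℝ) ≤ t := by
        have := Int.floor_le t; rw [hf] at this; exact_mod_cast this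
      linarith
  have ht2 := hru.2.1 (.proph ()) (2 - t) (1/10 : ℝ) hup hwp
  rcases ht2 with ⟨-, h⟩ | ⟨-, hf⟩
  · push_cast at h; linarith
  · rw [ht] at hf
    norm_num at hf
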